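/- If the pair (Q,W) of disjoint subsets of integers ≥ 2 with |Q|=|W| is n-admissible, then it is (n+1)-admissible; consequently it is m-admissible for every m ≥ n. -/

import Mathlib

set_option autoImplicit false

/-- The set of pinnacle values of the circular `n`-permutation `σ`,
as a subset of `{1, …, n}` (the value at position `i` is `σ i + 1`). -/
def pinnacleSet (n : ℕ) (σ : Equiv.Perm (Fin n)) : Finset ℕ :=
  (Finset.univ.filter fun i : Fin n =>
      σ ((finRotate n).symm i) < σ i ∧ σ (finRotate n i) < σ i).image
    fun i => (σ i : ℕ) + 1

/-- The set of vale values of the circular `n`-permutation `σ`, as a subset of `{1, …, n}`. -/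
def valeSet (n : ℕ) (σ : Equiv.Perm (Fin n)) : Finset ℕ :=
  (Finset.univ.filter fun i : Fin n =>
      σ i < σ ((finRotate n).symm i) ∧ σ i < σ (finRotate n i)).image
    fun i => (σ i : ℕ) + 1

/-- `(Q, W)` is `n`-admissible: `n` exceeds every element of `Q` and some circular
`n`-permutation has pinnacle set `Q ∪ {n}` and vale set `W ∪ {1}`. -/
def IsAdmissible (n : ℕ) (Q W : Finset ℕ) : Prop :=
  (∀ q ∈ Q, q < n) ∧
    ∃ σ : Equiv.Perm (Fin n), pinnacleSet n σ = Q ∪ {n} ∧ valeSet n σ = W ∪ {1}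

lemma mem_pinnacleSet {n : ℕ} (σ : Equiv.Perm (Fin (n+1))) (a : ℕ) :
    a ∈ pinnacleSet (n+1) σ ↔
      ∃ i : Fin (n+1), (σ (i-1) < σ i ∧ σ (i+1) < σ i) ∧ (σ i : ℕ) + 1 = a := by
  simp [pinnacleSet, finRotate_symm_apply, finRotate_succ_apply, Finset.mem_image,
    Finset.mem_filter]

lemma mem_valeSet {n : ℕ} (σ : Equiv.Perm (Fin (n+1))) (a : ℕ) :
    a ∈ valeSet (n+1) σ ↔
      ∃ i : Fin (n+1), (σ i < σ (i-1) ∧ σ i < σ (i+1)) ∧ (σ i : ℕ) + 1 = a := by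
  simp [valeSet, finRotate_symm_apply, finRotate_succ_apply, Finset.mem_image,
    Finset.mem_filter]

lemma pinnacleSet_mul_rot {n : ℕ} (σ : Equiv.Perm (Fin n)) :
    pinnacleSet n (σ * finRotate n) = pinnacleSet n σ := by
  unfold pinnacleSet
  ext a
  simp only [Finset.mem_image, Finset.mem_filter, Finset.mem_univ, true_and]
  simp only [Equiv.Perm.mul_apply]
  constructor
  · rintro ⟨i, ⟨h1, h2⟩, rfl⟩
    rw [Equiv.apply_symm_apply] at h1
    exact ⟨finRotate n i, ⟨by simpa [-finRotate_apply, -finRotate_symm_apply] using h1, h2⟩, rfl⟩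
  · rintro ⟨i, ⟨h1, h2⟩, rfl⟩
    refine ⟨(finRotate n).symm i, ⟨?_, ?_⟩, by rw [Equiv.apply_symm_apply]⟩
    · simpa [-finRotate_apply, -finRotate_symm_apply] using h1
    · simpa [-finRotate_apply, -finRotate_symm_apply] using h2

lemma valeSet_mul_rot {n : ℕ} (σ : Equiv.Perm (Fin n)) :
    valeSet n (σ * finRotate n) = valeSet n σ := by
  unfold valeSet
  ext a
  simp only [Finset.mem_image, Finset.mem_filter, Finset.mem_univ, true_and]
  simp only [Equiv.Perm.mul_apply]
  constructor
  · rintro ⟨i, ⟨h1, h2⟩, rfl⟩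
    rw [Equiv.apply_symm_apply] at h1
    exact ⟨finRotate n i, ⟨by simpa [-finRotate_apply, -finRotate_symm_apply] using h1, h2⟩, rfl⟩
  · rintro ⟨i, ⟨h1, h2⟩, rfl⟩
    refine ⟨(finRotate n).symm i, ⟨?_, ?_⟩, by rw [Equiv.apply_symm_apply]⟩
    · simpa [-finRotate_apply, -finRotate_symm_apply] using h1
    · simpa [-finRotate_apply, -finRotate_symm_apply] using h2

lemma pinnacleSet_mul_rot_pow {n : ℕ} (σ : Equiv.Perm (Fin n)) (k : ℕ) :
    pinnacleSet n (σ * (finRotate n)^k) = pinnacleSet n σ := by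
  induction k with
  | zero => simp
  | succ k ih => rw [pow_succ, ← mul_assoc, pinnacleSet_mul_rot, ih]

lemma valeSet_mul_rot_pow {n : ℕ} (σ : Equiv.Perm (Fin n)) (k : ℕ) :
    valeSet n (σ * (finRotate n)^k) = valeSet n σ := by
  induction k with
  | zero => simp
  | succ k ih => rw [pow_succ, ← mul_assoc, valeSet_mul_rot, ih]

open Fin.NatCast in
lemma finRotate_pow_apply {n : ℕ} (k : ℕ) :
    ∀ i : Fin (n+1), ((finRotate (n+1))^k) i = i + (k : Fin (n+1)) := by
  induction k with
  | zero => simp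
  | succ k ih =>
    intro i
    rw [pow_succ, Equiv.Perm.mul_apply, finRotate_succ_apply, ih]
    push_cast
    rw [add_assoc, add_comm (1 : Fin (n+1))]

section finarith
variable {m : ℕ}

lemma aux_castSucc_add_one {i : Fin (m+2)} (h : i ≠ Fin.last (m+1)) :
    (Fin.castSucc i : Fin (m+3)) + 1 = Fin.castSucc (i + 1) := by
  have hi : (i : ℕ) ≠ m + 1 := fun hc => h (Fin.ext hc)
  have hi2 := i.isLt
  apply Fin.ext
  simp only [Fin.add_def, Fin.coe_castSucc, Fin.val_one]
  rw [Nat.mod_eq_of_lt (by omega), Nat.mod_eq_of_lt (by omega)]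

lemma aux_castSucc_last_add_one :
    (Fin.castSucc (Fin.last (m+1)) : Fin (m+3)) + 1 = Fin.last (m+2) := by
  apply Fin.ext
  simp only [Fin.add_def, Fin.coe_castSucc, Fin.val_one, Fin.val_last]
  rw [Nat.mod_eq_of_lt (by omega)]

lemma aux_castSucc_sub_one {i : Fin (m+2)} (h : i ≠ 0) :
    (Fin.castSucc i : Fin (m+3)) - 1 = Fin.castSucc (i - 1) := by
  have hi : (i : ℕ) ≠ 0 := fun hc => h (Fin.ext hc)
  have hi2 := i.isLt
  apply Fin.ext
  simp only [Fin.sub_def, Fin.coe_castSucc, Fin.val_one]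
  rw [Nat.mod_eq_sub_mod (by omega), Nat.mod_eq_of_lt (by omega),
    Nat.mod_eq_sub_mod (by omega), Nat.mod_eq_of_lt (by omega)]
  omega

lemma aux_castSucc_zero_sub_one :
    (Fin.castSucc (0 : Fin (m+2)) : Fin (m+3)) - 1 = Fin.last (m+2) := by
  apply Fin.ext
  simp only [Fin.sub_def, Fin.coe_castSucc, Fin.val_one, Fin.val_last, Fin.val_zero]
  rw [Nat.mod_eq_of_lt (by omega)]
  omega

lemma aux_last_sub_one :
    (Fin.last (m+2)) - 1 = (Fin.castSucc (Fin.last (m+1)) : Fin (m+3)) := by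
  apply Fin.ext
  simp only [Fin.sub_def, Fin.coe_castSucc, Fin.val_one, Fin.val_last]
  rw [Nat.mod_eq_sub_mod (by omega), Nat.mod_eq_of_lt (by omega)]
  omega

lemma aux_last_add_one :
    (Fin.last (m+2)) + 1 = (Fin.castSucc (0 : Fin (m+2)) : Fin (m+3)) := by
  rw [Fin.last_add_one, Fin.castSucc_zero]

lemma aux_zero_sub_one : (0 : Fin (m+2)) - 1 = Fin.last (m+1) := by
  apply Fin.ext
  simp only [Fin.sub_def, Fin.val_one, Fin.val_last, Fin.val_zero]
  rw [Nat.mod_eq_of_lt (by omega)]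
  omega

end finarith

lemma step_lemma (m : ℕ) (σ : Equiv.Perm (Fin (m+2))) (hmax : ∀ j, σ j ≤ σ 0) :
    ∃ τ : Equiv.Perm (Fin (m+3)),
      pinnacleSet (m+3) τ = ((pinnacleSet (m+2) σ).erase (m+2)) ∪ {m+3} ∧
      valeSet (m+3) τ = valeSet (m+2) σ := by
  have h0 : σ 0 = Fin.last (m+1) :=
    le_antisymm (Fin.le_last _) (by simpa using hmax (σ.symm (Fin.last (m+1))))
  have hsl : ∀ i : Fin (m+2), i ≠ 0 → σ i < σ 0 := fun i hi =>
    lt_of_le_of_ne (hmax i) (fun hc => hi (σ.injective hc))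
  have hL0 : (Fin.last (m+1) : Fin (m+2)) ≠ 0 := by
    simp [Fin.ext_iff]
  set τ : Equiv.Perm (Fin (m+3)) := (finSuccEquivLast.symm).permCongr σ.optionCongr
    with hτdef
  have tcs : ∀ i : Fin (m+2), τ (Fin.castSucc i) = Fin.castSucc (σ i) := by
    intro i
    simp [hτdef, Equiv.permCongr_apply]
  have tl : τ (Fin.last (m+2)) = Fin.last (m+2) := by
    simp [hτdef, Equiv.permCongr_apply]
  refine ⟨τ, ?_, ?_⟩
  · ext a
    rw [mem_pinnacleSet]
    constructor
    · rintro ⟨p, ⟨h1, h2⟩, rfl⟩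
      induction p using Fin.lastCases with
      | last =>
        rw [tl]
        apply Finset.mem_union_right
        simp
      | cast i =>
        have hi0 : i ≠ 0 := by
          rintro rfl
          rw [aux_castSucc_zero_sub_one, tl, tcs] at h1
          exact absurd h1 (not_lt.mpr (le_of_lt (Fin.castSucc_lt_last _)))
        have hiL : i ≠ Fin.last (m+1) := by
          rintro rfl
          rw [aux_castSucc_last_add_one, tl, tcs] at h2
          exact absurd h2 (not_lt.mpr (le_of_lt (Fin.castSucc_lt_last _)))
        rw [aux_castSucc_sub_one hi0, tcs, tcs] at h1
        rw [aux_castSucc_add_one hiL, tcs, tcs] at h2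
        rw [tcs]
        apply Finset.mem_union_left
        rw [Finset.mem_erase]
        constructor
        · have hv : (σ i : ℕ) < m + 1 := by
            have := hsl i hi0
            rw [h0] at this
            simpa [Fin.lt_iff_val_lt_val] using this
          simp only [Fin.coe_castSucc]
          omega
        · rw [mem_pinnacleSet]
          exact ⟨i, ⟨Fin.castSucc_lt_castSucc_iff.mp h1,
            Fin.castSucc_lt_castSucc_iff.mp h2⟩, by simp⟩
    · intro ha
      rcases Finset.mem_union.mp ha with ha | ha
      · obtain ⟨hne, hp⟩ := Finset.mem_erase.mp ha
        rw [mem_pinnacleSet] at hp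
        obtain ⟨i, ⟨h1, h2⟩, rfl⟩ := hp
        have hi0 : i ≠ 0 := by
          rintro rfl
          apply hne
          rw [h0]
          simp
        have hiL : i ≠ Fin.last (m+1) := by
          rintro rfl
          rw [Fin.last_add_one] at h2
          exact absurd h2 (not_lt.mpr (hmax _))
        refine ⟨Fin.castSucc i, ⟨?_, ?_⟩, by rw [tcs]; simp⟩
        · rw [aux_castSucc_sub_one hi0, tcs, tcs]
          exact Fin.castSucc_lt_castSucc_iff.mpr h1
        · rw [aux_castSucc_add_one hiL, tcs, tcs]
          exact Fin.castSucc_lt_castSucc_iff.mpr h2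
      · have ha' : a = m + 3 := by simpa using ha
        subst ha'
        refine ⟨Fin.last (m+2), ⟨?_, ?_⟩, by rw [tl]; simp⟩
        · rw [aux_last_sub_one, tl, tcs]
          exact Fin.castSucc_lt_last _
        · rw [aux_last_add_one, tl, tcs]
          exact Fin.castSucc_lt_last _
  · ext a
    rw [mem_valeSet, mem_valeSet]
    constructor
    · rintro ⟨p, ⟨h1, h2⟩, rfl⟩
      induction p using Fin.lastCases with
      | last =>
        rw [aux_last_sub_one, tl, tcs] at h1
        exact absurd h1 (not_lt.mpr (le_of_lt (Fin.castSucc_lt_last _)))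
      | cast i =>
        have hi0 : i ≠ 0 := by
          rintro rfl
          have h0L : (0 : Fin (m+2)) ≠ Fin.last (m+1) := Ne.symm hL0
          rw [aux_castSucc_add_one h0L, tcs, tcs] at h2
          exact absurd (Fin.castSucc_lt_castSucc_iff.mp h2) (not_lt.mpr (hmax _))
        rw [aux_castSucc_sub_one hi0, tcs, tcs] at h1
        rw [tcs]
        refine ⟨i, ⟨Fin.castSucc_lt_castSucc_iff.mp h1, ?_⟩, by simp⟩
        by_cases hiL : i = Fin.last (m+1)
        · subst hiL
          rw [Fin.last_add_one]
          exact hsl _ hL0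
        · rw [aux_castSucc_add_one hiL, tcs, tcs] at h2
          exact Fin.castSucc_lt_castSucc_iff.mp h2
    · rintro ⟨i, ⟨h1, h2⟩, rfl⟩
      have hi0 : i ≠ 0 := by
        rintro rfl
        exact absurd h2 (not_lt.mpr (hmax _))
      refine ⟨Fin.castSucc i, ⟨?_, ?_⟩, by rw [tcs]; simp⟩
      · rw [aux_castSucc_sub_one hi0, tcs, tcs]
        exact Fin.castSucc_lt_castSucc_iff.mpr h1
      · by_cases hiL : i = Fin.last (m+1)
        · subst hiL
          rw [aux_castSucc_last_add_one, tl, tcs]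
          exact Fin.castSucc_lt_last _
        · rw [aux_castSucc_add_one hiL, tcs, tcs]
          exact Fin.castSucc_lt_castSucc_iff.mpr h2

open Fin.NatCast in
lemma isAdmissible_succ (n : ℕ) (Q W : Finset ℕ) (h : IsAdmissible n Q W) :
    IsAdmissible (n+1) Q W := by
  obtain ⟨hlt, σ, hp, hv⟩ := h
  match n, σ, hp, hv, hlt with
  | 0, σ, hp, hv, hlt =>
    exfalso
    have : (0 : ℕ) ∈ pinnacleSet 0 σ := by
      rw [hp]; simp
    simp [pinnacleSet] at this
  | 1, σ, hp, hv, hlt =>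
    exfalso
    have : (1 : ℕ) ∈ pinnacleSet 1 σ := by
      rw [hp]; simp
    simp [pinnacleSet] at this
  | (m+2), σ, hp, hv, hlt =>
    set k : ℕ := (σ.symm (Fin.last (m+1))).val with hk
    set σ' : Equiv.Perm (Fin (m+2)) := σ * (finRotate (m+2))^k with hσ'
    have hσ'0 : σ' 0 = Fin.last (m+1) := by
      rw [hσ', Equiv.Perm.mul_apply, finRotate_pow_apply, zero_add, hk,
        Fin.cast_val_eq_self, Equiv.apply_symm_apply]
    have hmax : ∀ j, σ' j ≤ σ' 0 := by
      intro j
      rw [hσ'0]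
      exact Fin.le_last _
    obtain ⟨τ, hτp, hτv⟩ := step_lemma m σ' hmax
    have hp' : pinnacleSet (m+2) σ' = Q ∪ {m+2} := by
      rw [hσ', pinnacleSet_mul_rot_pow, hp]
    have hv' : valeSet (m+2) σ' = W ∪ {1} := by
      rw [hσ', valeSet_mul_rot_pow, hv]
    refine ⟨fun q hq => lt_trans (hlt q hq) (Nat.lt_succ_self _), τ, ?_, ?_⟩
    · rw [hτp, hp']
      ext x
      simp only [Finset.mem_union, Finset.mem_erase, Finset.mem_singleton]
      constructor
      · rintro (⟨hx, hx' | hx'⟩ | hx)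
        · exact Or.inl hx'
        · exact absurd hx' hx
        · exact Or.inr hx
      · rintro (hx | hx)
        · exact Or.inl ⟨by have := hlt x hx; omega, Or.inl hx⟩
        · exact Or.inr hx
    · rw [hτv, hv']


/-- If a pair `(Q, W)` of disjoint subsets of `ℤ_{≥2}` of equal cardinality is
`n`-admissible, then it is `(n+1)`-admissible; consequently it is `m`-admissible
for every `m ≥ n`. -/
theorem isAdmissible_succ_and_ge (n : ℕ) (Q W : Finset ℕ)
    (hQW : Disjoint Q W) (hQ2 : ∀ q ∈ Q, 2 ≤ q) (hW2 : ∀ w ∈ W, 2 ≤ w)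
    (hcard : Q.card = W.card) (h : IsAdmissible n Q W) :
    IsAdmissible (n + 1) Q W ∧ ∀ m, n ≤ m → IsAdmissible m Q W := by
  refine ⟨isAdmissible_succ n Q W h, ?_⟩
  intro m hm
  obtain ⟨k, rfl⟩ := Nat.exists_eq_add_of_le hm
  clear hm
  induction k with
  | zero => exact h
  | succ k ih => exact isAdmissible_succ _ _ _ ih
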